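/- Let λ₁ ≥ λ₂ ≥ λ₃ ≥ λ₄ be integers with λ₁ + λ₂ + λ₃ + λ₄ = 0 and λ₃ ≥ 0. Then the sum over all integer triples (μ₁, μ₂, μ₃) with λ₁ ≥ μ₁ ≥ λ₂ ≥ μ₂ ≥ λ₃ ≥ μ₃ ≥ λ₄ and μ₁ + μ₂ + μ₃ = 0 of the quantity (μ₁ - μ₂ + 1) equals (1/2)(λ₁ - λ₂ + 1)(λ₂ - λ₃ + 1)(λ₁ - λ₃ + 2). -/

import Mathlib

open Finset

lemma Icc_succ_right' (m n : ℤ) (h : m ≤ n + 1) :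
    Finset.Icc m (n+1) = insert (n+1) (Finset.Icc m n) := by
  ext x; simp [Finset.mem_Icc]; omega

lemma sumIccQ (m n : ℤ) (h : m ≤ n) :
    (∑ i ∈ Finset.Icc m n, (i : ℚ)) = ((m : ℚ) + n) * (n - m + 1) / 2 := by
  refine Int.le_induction
    (motive := fun n _ => (∑ i ∈ Finset.Icc m n, (i : ℚ)) = ((m : ℚ) + n) * (n - m + 1) / 2)
    ?_ (fun n hmn ih => ?_) n h
  · rw [Finset.Icc_self, Finset.sum_singleton]; ring
  · rw [Icc_succ_right' m n (by omega), Finset.sum_insert (by simp [Finset.mem_Icc]), ih]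
    push_cast
    ring

lemma cardIccQ (m n : ℤ) (h : m ≤ n) :
    ((Finset.Icc m n).card : ℚ) = (n : ℚ) - m + 1 := by
  obtain ⟨k, hk⟩ : ∃ k : ℕ, n + 1 - m = (k : ℤ) :=
    ⟨(n + 1 - m).toNat, (Int.toNat_of_nonneg (by omega)).symm⟩
  rw [Int.card_Icc, hk, Int.toNat_natCast]
  have : ((k : ℤ) : ℚ) = (k : ℚ) := by push_cast; ring
  rw [← this, ← hk]
  push_cast
  ring

theorem stmt_5 (l1 l2 l3 l4 : ℤ) (h12 : l2 ≤ l1) (h23 : l3 ≤ l2) (h34 : l4 ≤ l3)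
    (hsum : l1 + l2 + l3 + l4 = 0) (h3 : 0 ≤ l3) :
    ((∑ μ ∈ (Finset.Icc l2 l1 ×ˢ Finset.Icc l3 l2 ×ˢ Finset.Icc l4 l3).filter
        (fun μ : ℤ × ℤ × ℤ => μ.1 + μ.2.1 + μ.2.2 = 0),
      (μ.1 - μ.2.1 + 1) : ℤ) : ℚ)
    = (1/2 : ℚ) * (l1 - l2 + 1) * (l2 - l3 + 1) * (l1 - l3 + 2) := by
  have key : (∑ μ ∈ (Finset.Icc l2 l1 ×ˢ Finset.Icc l3 l2 ×ˢ Finset.Icc l4 l3).filter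
        (fun μ : ℤ × ℤ × ℤ => μ.1 + μ.2.1 + μ.2.2 = 0),
      (μ.1 - μ.2.1 + 1) : ℤ)
      = ∑ p ∈ Finset.Icc l2 l1 ×ˢ Finset.Icc l3 l2, (p.1 - p.2 + 1) := by
    refine Finset.sum_nbij' (i := fun μ : ℤ × ℤ × ℤ => (μ.1, μ.2.1))
      (j := fun p : ℤ × ℤ => (p.1, p.2, -(p.1 + p.2))) ?_ ?_ ?_ ?_ ?_
    · intro μ hμ
      simp only [Finset.mem_filter, Finset.mem_product, Finset.mem_Icc] at hμ ⊢
      omega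
    · intro p hp
      simp only [Finset.mem_filter, Finset.mem_product, Finset.mem_Icc] at hp ⊢
      omega
    · intro μ hμ
      simp only [Finset.mem_filter, Finset.mem_product, Finset.mem_Icc] at hμ
      ext <;> simp <;> omega
    · intro p hp
      simp
    · intro μ hμ
      simp
  rw [key]
  push_cast
  rw [Finset.sum_product]
  have inner : ∀ a : ℤ, (∑ b ∈ Finset.Icc l3 l2, ((a : ℚ) - (b : ℚ) + 1))
      = ((l2 : ℚ) - l3 + 1) * a + (((l2 : ℚ) - l3 + 1) - ((l3 : ℚ) + l2) * (l2 - l3 + 1) / 2) := by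
    intro a
    have h1 : ∀ b : ℤ, ((a : ℚ) - (b : ℚ) + 1) = ((a : ℚ) + 1) - (b : ℚ) := fun b => by ring
    simp_rw [h1]
    rw [Finset.sum_sub_distrib, Finset.sum_const, sumIccQ l3 l2 h23, nsmul_eq_mul]
    rw [show ((Finset.Icc l3 l2).card : ℚ) = (l2 : ℚ) - l3 + 1 from cardIccQ l3 l2 h23]
    ring
  simp_rw [inner]
  rw [Finset.sum_add_distrib, ← Finset.mul_sum, sumIccQ l2 l1 h12, Finset.sum_const,
    nsmul_eq_mul, cardIccQ l2 l1 h12]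
  ring
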